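/- Let G be a finite abelian group with character group Ĝ = Hom(G, ℂˣ), and let J = Σ_{g,h ∈ G} a_{gh} · g ⊗ h ∈ ℂ[G] ⊗ ℂ[G]. Define the function c : Ĝ × Ĝ → ℂ by c(χ, ψ) = Σ_{g,h ∈ G} a_{gh} χ(g) ψ(h). Then J is a twist for ℂ[G] if and only if c is a normalized 2-cocycle of Ĝ with values in ℂˣ, i.e.: c(χ, ψ) ≠ 0 for all χ, ψ ∈ Ĝ; c(1, ψ) = c(χ, 1) = 1 for all χ, ψ ∈ Ĝ; and c(χψ, φ)·c(χ, ψ) = c(χ, ψφ)·c(ψ, φ) for all χ, ψ, φ ∈ Ĝ. -/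

import Mathlib

open TensorProduct

noncomputable section

variable (G : Type*) [Group G]

/-- Comultiplication on the group algebra `ℂ[G]`, determined by `Δ(g) = g ⊗ g`. -/
def GroupAlgebra.comul :
    MonoidAlgebra ℂ G →ₐ[ℂ] MonoidAlgebra ℂ G ⊗[ℂ] MonoidAlgebra ℂ G :=
  (MonoidAlgebra.lift ℂ _ G)
    { toFun := fun g => MonoidAlgebra.of ℂ G g ⊗ₜ[ℂ] MonoidAlgebra.of ℂ G g
      map_one' := by simp [Algebra.TensorProduct.one_def, MonoidAlgebra.one_def]
      map_mul' := fun g h => by simp [Algebra.TensorProduct.tmul_mul_tmul] }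

/-- Counit on the group algebra `ℂ[G]`, determined by `ε(g) = 1`. -/
def GroupAlgebra.counit : MonoidAlgebra ℂ G →ₐ[ℂ] ℂ :=
  (MonoidAlgebra.lift ℂ ℂ G) 1

/-- The equation `((Δ ⊗ id)(J))·(J ⊗ 1) = ((id ⊗ Δ)(J))·(1 ⊗ J)` in `ℂ[G] ⊗ ℂ[G] ⊗ ℂ[G]`. -/
def GroupAlgebra.TwistEq (J : MonoidAlgebra ℂ G ⊗[ℂ] MonoidAlgebra ℂ G) : Prop :=
  (Algebra.TensorProduct.assoc ℂ ℂ ℂ (MonoidAlgebra ℂ G) (MonoidAlgebra ℂ G) (MonoidAlgebra ℂ G))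
      ((Algebra.TensorProduct.map (GroupAlgebra.comul G) (AlgHom.id ℂ (MonoidAlgebra ℂ G))) J) *
    (Algebra.TensorProduct.assoc ℂ ℂ ℂ (MonoidAlgebra ℂ G) (MonoidAlgebra ℂ G) (MonoidAlgebra ℂ G))
      (J ⊗ₜ[ℂ] (1 : MonoidAlgebra ℂ G)) =
  (Algebra.TensorProduct.map (AlgHom.id ℂ (MonoidAlgebra ℂ G)) (GroupAlgebra.comul G)) J *
    ((1 : MonoidAlgebra ℂ G) ⊗ₜ[ℂ] J)

/-- The equations `(ε ⊗ id)(J) = 1` and `(id ⊗ ε)(J) = 1`. -/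
def GroupAlgebra.CounitEq (J : MonoidAlgebra ℂ G ⊗[ℂ] MonoidAlgebra ℂ G) : Prop :=
  (Algebra.TensorProduct.lid ℂ (MonoidAlgebra ℂ G))
      ((Algebra.TensorProduct.map (GroupAlgebra.counit G) (AlgHom.id ℂ (MonoidAlgebra ℂ G))) J) = 1 ∧
  (Algebra.TensorProduct.rid ℂ ℂ (MonoidAlgebra ℂ G))
      ((Algebra.TensorProduct.map (AlgHom.id ℂ (MonoidAlgebra ℂ G)) (GroupAlgebra.counit G)) J) = 1

/-- A twist for the group algebra `ℂ[G]`: an invertible element of `ℂ[G] ⊗ ℂ[G]` satisfying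
`((Δ ⊗ id)(J))·(J ⊗ 1) = ((id ⊗ Δ)(J))·(1 ⊗ J)` and `(ε ⊗ id)(J) = (id ⊗ ε)(J) = 1`. -/
def GroupAlgebra.IsTwist (J : MonoidAlgebra ℂ G ⊗[ℂ] MonoidAlgebra ℂ G) : Prop :=
  IsUnit J ∧ GroupAlgebra.TwistEq G J ∧ GroupAlgebra.CounitEq G J

end


noncomputable section
namespace TwistAux
open Finset
open scoped Classical
set_option linter.unusedSectionVars false
set_option linter.unreachableTactic false
set_option linter.unusedTactic false
variable (G : Type*) [CommGroup G] [Fintype G]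

variable (G : Type*) [CommGroup G] [Fintype G]

lemma hasEnough : HasEnoughRootsOfUnity ℂ (Monoid.exponent G) := by
  have : NeZero ((Monoid.exponent G : ℂ)) :=
    ⟨Nat.cast_ne_zero.mpr Monoid.exponent_ne_zero_of_finite⟩
  infer_instance

instance : Finite (G →* ℂˣ) := by
  have := hasEnough G
  exact (CommGroup.monoidHom_mulEquiv_of_hasEnoughRootsOfUnity G ℂ).elim
    fun e => Finite.of_equiv G e.symm.toEquiv

instance : Fintype (G →* ℂˣ) := Fintype.ofFinite _

lemma exists_char {g : G} (hg : g ≠ 1) : ∃ χ : G →* ℂˣ, χ g ≠ 1 := by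
  have := hasEnough G
  exact CommGroup.exists_apply_ne_one_of_hasEnoughRootsOfUnity G ℂ hg

lemma sum_hom_eq_zero {K : Type*} [CommGroup K] [Fintype K] (F : K →* ℂˣ)
    (h : ∃ k, F k ≠ 1) : ∑ k, ((F k : ℂˣ) : ℂ) = 0 := by
  obtain ⟨k₀, hk⟩ := h
  have h1 : ((F k₀ : ℂˣ) : ℂ) * ∑ k, ((F k : ℂˣ) : ℂ) = ∑ k, ((F k : ℂˣ) : ℂ) := by
    rw [Finset.mul_sum]
    rw [← Equiv.sum_comp (Equiv.mulLeft k₀) (fun k => ((F k : ℂˣ) : ℂ))]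
    refine Finset.sum_congr rfl fun k _ => ?_
    simp [map_mul]
  have h2 : (((F k₀ : ℂˣ) : ℂ) - 1) * ∑ k, ((F k : ℂˣ) : ℂ) = 0 := by linear_combination h1
  rcases mul_eq_zero.mp h2 with h | h
  · exact absurd (Units.val_eq_one.mp (sub_eq_zero.mp h)) hk
  · exact h

def evalHom (g : G) : (G →* ℂˣ) →* ℂˣ where
  toFun χ := χ g
  map_one' := rfl
  map_mul' _ _ := rfl

variable {G}

lemma orth_dual (g h : G) :
    ∑ χ : G →* ℂˣ, ((((χ g)⁻¹ : ℂˣ) : ℂ) * ((χ h : ℂˣ) : ℂ)) =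
      if g = h then (Fintype.card (G →* ℂˣ) : ℂ) else 0 := by
  have key : ∀ χ : G →* ℂˣ, (((χ g)⁻¹ : ℂˣ) : ℂ) * ((χ h : ℂˣ) : ℂ)
      = ((evalHom G (g⁻¹ * h)) χ : ℂ) := by
    intro χ
    simp [evalHom, map_mul, map_inv]
  rw [Finset.sum_congr rfl fun χ _ => key χ]
  split_ifs with hgh
  · subst hgh
    simp [evalHom]
  · exact sum_hom_eq_zero _ (by
      obtain ⟨χ, hχ⟩ := exists_char G (g := g⁻¹ * h) (by
        intro hc; exact hgh (by rwa [inv_mul_eq_one] at hc))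
      exact ⟨χ, hχ⟩)

lemma orth_group (χ ψ : G →* ℂˣ) :
    ∑ g : G, ((((χ g)⁻¹ : ℂˣ) : ℂ) * ((ψ g : ℂˣ) : ℂ)) =
      if χ = ψ then (Fintype.card G : ℂ) else 0 := by
  have key : ∀ g : G, (((χ g)⁻¹ : ℂˣ) : ℂ) * ((ψ g : ℂˣ) : ℂ) = (((χ⁻¹ * ψ) g : ℂˣ) : ℂ) := by
    intro g; simp
  rw [Finset.sum_congr rfl fun g _ => key g]
  split_ifs with hcp
  · subst hcp; simp
  · refine sum_hom_eq_zero _ ?_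
    by_contra hc
    push_neg at hc
    apply hcp
    ext g
    have := hc g
    rw [MonoidHom.mul_apply, MonoidHom.inv_apply] at this
    have h2 : (χ g) * ((χ g)⁻¹ * ψ g) = (χ g) * 1 := by rw [this]
    rw [mul_one, ← mul_assoc, mul_inv_cancel, one_mul] at h2
    exact congrArg Units.val h2.symm

lemma inj_helper {ι κ V : Type*} [Fintype κ] [AddCommGroup V] [Module ℂ V]
    (b : Module.Basis ι ℂ V) (T : V →ₗ[ℂ] (κ → ℂ)) (N : ι → κ → ℂ)
    (h : ∀ i j, (∑ k, N i k * T (b j) k) = if i = j then 1 else 0) :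
    Function.Injective T := by
  have key : ∀ i : ι, (∑ k : κ, N i k • ((LinearMap.proj k).comp T))
      = (Finsupp.lapply i).comp (b.repr : V →ₗ[ℂ] (ι →₀ ℂ)) := by
    intro i
    refine b.ext fun j => ?_
    simp only [LinearMap.coe_sum, Finset.sum_apply, LinearMap.smul_apply, LinearMap.comp_apply,
      LinearMap.proj_apply, smul_eq_mul, Finsupp.lapply_apply, LinearEquiv.coe_coe,
      Module.Basis.repr_self]
    rw [h i j, Finsupp.single_apply]
    simp [eq_comm]
  intro x y hxy
  apply b.repr.injective
  ext i
  have hx := congrArg (fun L : V →ₗ[ℂ] ℂ => L x) (key i)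
  have hy := congrArg (fun L : V →ₗ[ℂ] ℂ => L y) (key i)
  simp only [LinearMap.coe_sum, Finset.sum_apply, LinearMap.smul_apply, LinearMap.comp_apply,
    LinearMap.proj_apply, smul_eq_mul, Finsupp.lapply_apply, LinearEquiv.coe_coe] at hx hy
  rw [← hx, ← hy, hxy]

variable (G)

def pcomp {ι κ : Type*} (f : ι → κ) : (κ → ℂ) →ₐ[ℂ] (ι → ℂ) where
  toFun v := v ∘ f
  map_one' := rfl
  map_mul' _ _ := rfl
  map_zero' := rfl
  map_add' _ _ := rfl
  commutes' _ := rfl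

@[simp] lemma pcomp_apply {ι κ : Type*} (f : ι → κ) (v : κ → ℂ) (i : ι) :
    pcomp f v i = v (f i) := rfl

def fourier : MonoidAlgebra ℂ G →ₐ[ℂ] ((G →* ℂˣ) → ℂ) :=
  (MonoidAlgebra.lift ℂ _ G)
    { toFun := fun g => fun χ => ((χ g : ℂˣ) : ℂ)
      map_one' := by funext χ; simp
      map_mul' := fun g h => by funext χ; simp [Pi.mul_apply, map_mul] }

@[simp] lemma fourier_of (g : G) :
    fourier G (MonoidAlgebra.of ℂ G g) = fun χ => ((χ g : ℂˣ) : ℂ) :=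
  MonoidAlgebra.lift_of _ g

def mabasis : Module.Basis G ℂ (MonoidAlgebra ℂ G) := MonoidAlgebra.basis G ℂ

@[simp] lemma mabasis_apply (g : G) : mabasis G g = MonoidAlgebra.of ℂ G g := by
  rw [mabasis, MonoidAlgebra.basis_apply, MonoidAlgebra.of_apply]

-- normalized orthogonality
lemma card_dual_ne_zero : (Fintype.card (G →* ℂˣ) : ℂ) ≠ 0 :=
  Nat.cast_ne_zero.mpr Fintype.card_ne_zero

lemma card_ne_zero' : (Fintype.card G : ℂ) ≠ 0 :=
  Nat.cast_ne_zero.mpr Fintype.card_ne_zero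

variable {G}

lemma northo_dual (g h : G) :
    ∑ χ : G →* ℂˣ, (Fintype.card (G →* ℂˣ) : ℂ)⁻¹ *
      ((((χ g)⁻¹ : ℂˣ) : ℂ) * ((χ h : ℂˣ) : ℂ)) = if g = h then 1 else 0 := by
  rw [← Finset.mul_sum, orth_dual]
  split_ifs
  · exact inv_mul_cancel₀ (card_dual_ne_zero G)
  · exact mul_zero _

lemma northo_group (χ ψ : G →* ℂˣ) :
    ∑ g : G, (Fintype.card G : ℂ)⁻¹ *
      ((((χ g)⁻¹ : ℂˣ) : ℂ) * ((ψ g : ℂˣ) : ℂ)) = if χ = ψ then 1 else 0 := by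
  rw [← Finset.mul_sum, orth_group]
  split_ifs
  · exact inv_mul_cancel₀ (card_ne_zero' G)
  · exact mul_zero _

variable (G)

/-- Fourier on `ℂ[G] ⊗ ℂ[G]`. -/
def phi2 : MonoidAlgebra ℂ G ⊗[ℂ] MonoidAlgebra ℂ G →ₐ[ℂ]
    (((G →* ℂˣ) × (G →* ℂˣ)) → ℂ) :=
  Algebra.TensorProduct.lift ((pcomp Prod.fst).comp (fourier G))
    ((pcomp Prod.snd).comp (fourier G)) fun _ _ => Commute.all _ _

@[simp] lemma phi2_tmul (x y : MonoidAlgebra ℂ G) :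
    phi2 G (x ⊗ₜ[ℂ] y) = fun p => fourier G x p.1 * fourier G y p.2 := by
  funext p
  simp [phi2, Algebra.TensorProduct.lift_tmul]

/-- Fourier on `ℂ[G] ⊗ (ℂ[G] ⊗ ℂ[G])`. -/
def phi3 : MonoidAlgebra ℂ G ⊗[ℂ] (MonoidAlgebra ℂ G ⊗[ℂ] MonoidAlgebra ℂ G) →ₐ[ℂ]
    (((G →* ℂˣ) × (G →* ℂˣ) × (G →* ℂˣ)) → ℂ) :=
  Algebra.TensorProduct.lift ((pcomp fun p => p.1).comp (fourier G))
    (Algebra.TensorProduct.lift ((pcomp fun p => p.2.1).comp (fourier G))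
      ((pcomp fun p => p.2.2).comp (fourier G)) fun _ _ => Commute.all _ _)
    fun _ _ => Commute.all _ _

@[simp] lemma phi3_tmul (x y z : MonoidAlgebra ℂ G) :
    phi3 G (x ⊗ₜ[ℂ] (y ⊗ₜ[ℂ] z)) =
      fun p => fourier G x p.1 * (fourier G y p.2.1 * fourier G z p.2.2) := by
  funext p
  simp [phi3, Algebra.TensorProduct.lift_tmul]

lemma fourier_injective : Function.Injective (fourier G) := by
  apply inj_helper (mabasis G) (fourier G).toLinearMap
    (fun g χ => (Fintype.card (G →* ℂˣ) : ℂ)⁻¹ * (((χ g)⁻¹ : ℂˣ) : ℂ))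
  intro i j
  simp only [AlgHom.toLinearMap_apply, mabasis_apply, fourier_of]
  rw [← northo_dual i j]
  exact Finset.sum_congr rfl fun χ _ => by ring

lemma sum_factor {α β : Type*} [Fintype α] [Fintype β] (f : α → ℂ) (g : β → ℂ) :
    ∑ p : α × β, f p.1 * g p.2 = (∑ a, f a) * (∑ b, g b) := by
  rw [Finset.sum_mul_sum]
  exact Fintype.sum_prod_type _

lemma phi2_injective : Function.Injective (phi2 G) := by
  apply inj_helper ((mabasis G).tensorProduct (mabasis G)) (phi2 G).toLinearMap
    (fun i p => ((Fintype.card (G →* ℂˣ) : ℂ)⁻¹ * (((p.1 i.1)⁻¹ : ℂˣ) : ℂ)) *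
      ((Fintype.card (G →* ℂˣ) : ℂ)⁻¹ * (((p.2 i.2)⁻¹ : ℂˣ) : ℂ)))
  intro i j
  simp only [AlgHom.toLinearMap_apply, Module.Basis.tensorProduct_apply', mabasis_apply, phi2_tmul,
    fourier_of]
  have hsum : ∑ p : (G →* ℂˣ) × (G →* ℂˣ),
      ((Fintype.card (G →* ℂˣ) : ℂ)⁻¹ * (((p.1 i.1)⁻¹ : ℂˣ) : ℂ)) *
        ((Fintype.card (G →* ℂˣ) : ℂ)⁻¹ * (((p.2 i.2)⁻¹ : ℂˣ) : ℂ)) *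
        (((p.1 j.1 : ℂˣ) : ℂ) * ((p.2 j.2 : ℂˣ) : ℂ)) =
      ∑ p : (G →* ℂˣ) × (G →* ℂˣ),
        (fun χ : G →* ℂˣ => (Fintype.card (G →* ℂˣ) : ℂ)⁻¹ *
          ((((χ i.1)⁻¹ : ℂˣ) : ℂ) * ((χ j.1 : ℂˣ) : ℂ))) p.1 *
        (fun ψ : G →* ℂˣ => (Fintype.card (G →* ℂˣ) : ℂ)⁻¹ *
          ((((ψ i.2)⁻¹ : ℂˣ) : ℂ) * ((ψ j.2 : ℂˣ) : ℂ))) p.2 :=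
    Finset.sum_congr rfl fun p _ => by ring
  rw [hsum, sum_factor (fun χ : G →* ℂˣ => (Fintype.card (G →* ℂˣ) : ℂ)⁻¹ *
        ((((χ i.1)⁻¹ : ℂˣ) : ℂ) * ((χ j.1 : ℂˣ) : ℂ)))
      (fun ψ : G →* ℂˣ => (Fintype.card (G →* ℂˣ) : ℂ)⁻¹ *
        ((((ψ i.2)⁻¹ : ℂˣ) : ℂ) * ((ψ j.2 : ℂˣ) : ℂ))), northo_dual, northo_dual]
  by_cases h1 : i.1 = j.1 <;> by_cases h2 : i.2 = j.2 <;>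
    simp [Prod.ext_iff, h1, h2]

lemma phi3_injective : Function.Injective (phi3 G) := by
  have key : Function.Injective ((phi3 G).toLinearMap : MonoidAlgebra ℂ G ⊗[ℂ]
      (MonoidAlgebra ℂ G ⊗[ℂ] MonoidAlgebra ℂ G) →ₗ[ℂ]
      (((G →* ℂˣ) × (G →* ℂˣ) × (G →* ℂˣ)) → ℂ)) := inj_helper
    ((mabasis G).tensorProduct ((mabasis G).tensorProduct (mabasis G)))
    (phi3 G).toLinearMap
    (fun (i : G × G × G) (p : (G →* ℂˣ) × (G →* ℂˣ) × (G →* ℂˣ)) => ((Fintype.card (G →* ℂˣ) : ℂ)⁻¹ * (((p.1 i.1)⁻¹ : ℂˣ) : ℂ)) *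
      (((Fintype.card (G →* ℂˣ) : ℂ)⁻¹ * (((p.2.1 i.2.1)⁻¹ : ℂˣ) : ℂ)) *
       ((Fintype.card (G →* ℂˣ) : ℂ)⁻¹ * (((p.2.2 i.2.2)⁻¹ : ℂˣ) : ℂ)))) ?_
  · intro x y hxy
    exact key hxy
  intro i j
  simp only [AlgHom.toLinearMap_apply, Module.Basis.tensorProduct_apply', mabasis_apply, phi3_tmul,
    fourier_of]
  have hsum : ∑ p : (G →* ℂˣ) × (G →* ℂˣ) × (G →* ℂˣ),
      ((Fintype.card (G →* ℂˣ) : ℂ)⁻¹ * (((p.1 i.1)⁻¹ : ℂˣ) : ℂ)) *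
        (((Fintype.card (G →* ℂˣ) : ℂ)⁻¹ * (((p.2.1 i.2.1)⁻¹ : ℂˣ) : ℂ)) *
         ((Fintype.card (G →* ℂˣ) : ℂ)⁻¹ * (((p.2.2 i.2.2)⁻¹ : ℂˣ) : ℂ))) *
        (((p.1 j.1 : ℂˣ) : ℂ) * (((p.2.1 j.2.1 : ℂˣ) : ℂ) * ((p.2.2 j.2.2 : ℂˣ) : ℂ))) =
      ∑ p : (G →* ℂˣ) × (G →* ℂˣ) × (G →* ℂˣ),
        (fun χ : G →* ℂˣ => (Fintype.card (G →* ℂˣ) : ℂ)⁻¹ *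
          ((((χ i.1)⁻¹ : ℂˣ) : ℂ) * ((χ j.1 : ℂˣ) : ℂ))) p.1 *
        (fun q : (G →* ℂˣ) × (G →* ℂˣ) =>
          ((Fintype.card (G →* ℂˣ) : ℂ)⁻¹ *
            ((((q.1 i.2.1)⁻¹ : ℂˣ) : ℂ) * ((q.1 j.2.1 : ℂˣ) : ℂ))) *
          ((Fintype.card (G →* ℂˣ) : ℂ)⁻¹ *
            ((((q.2 i.2.2)⁻¹ : ℂˣ) : ℂ) * ((q.2 j.2.2 : ℂˣ) : ℂ)))) p.2 :=
    Finset.sum_congr rfl fun p _ => by ring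
  rw [hsum, sum_factor (fun χ : G →* ℂˣ => (Fintype.card (G →* ℂˣ) : ℂ)⁻¹ *
        ((((χ i.1)⁻¹ : ℂˣ) : ℂ) * ((χ j.1 : ℂˣ) : ℂ)))
      (fun q : (G →* ℂˣ) × (G →* ℂˣ) =>
        ((Fintype.card (G →* ℂˣ) : ℂ)⁻¹ *
          ((((q.1 i.2.1)⁻¹ : ℂˣ) : ℂ) * ((q.1 j.2.1 : ℂˣ) : ℂ))) *
        ((Fintype.card (G →* ℂˣ) : ℂ)⁻¹ *
          ((((q.2 i.2.2)⁻¹ : ℂˣ) : ℂ) * ((q.2 j.2.2 : ℂˣ) : ℂ)))),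
    sum_factor (fun ψ : G →* ℂˣ => (Fintype.card (G →* ℂˣ) : ℂ)⁻¹ *
        ((((ψ i.2.1)⁻¹ : ℂˣ) : ℂ) * ((ψ j.2.1 : ℂˣ) : ℂ)))
      (fun φ : G →* ℂˣ => (Fintype.card (G →* ℂˣ) : ℂ)⁻¹ *
        ((((φ i.2.2)⁻¹ : ℂˣ) : ℂ) * ((φ j.2.2 : ℂˣ) : ℂ))),
    northo_dual, northo_dual, northo_dual]
  by_cases h1 : i.1 = j.1 <;> by_cases h2 : i.2.1 = j.2.1 <;> by_cases h3 : i.2.2 = j.2.2 <;>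
    simp [Prod.ext_iff, h1, h2, h3]

/-- delta elements in the monoid algebra -/
def deltaElt (χ₀ : G →* ℂˣ) : MonoidAlgebra ℂ G :=
  (Fintype.card G : ℂ)⁻¹ • ∑ g : G, ((((χ₀ g)⁻¹ : ℂˣ) : ℂ) • MonoidAlgebra.of ℂ G g)

lemma fourier_deltaElt (χ₀ : G →* ℂˣ) :
    fourier G (deltaElt G χ₀) = fun ψ => if χ₀ = ψ then 1 else 0 := by
  funext ψ
  simp only [deltaElt, map_smul, map_sum, fourier_of, Pi.smul_apply, Finset.sum_apply,
    smul_eq_mul]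
  rw [Finset.mul_sum, ← northo_group χ₀ ψ]
  all_goals exact Finset.sum_congr rfl fun g _ => by ring


-- computation lemmas for the specific element J
variable {G} (a : G → G → ℂ)

lemma comul_of (g : G) :
    GroupAlgebra.comul G (MonoidAlgebra.of ℂ G g) =
      MonoidAlgebra.of ℂ G g ⊗ₜ[ℂ] MonoidAlgebra.of ℂ G g :=
  MonoidAlgebra.lift_of _ g

lemma counit_of (g : G) : GroupAlgebra.counit G (MonoidAlgebra.of ℂ G g) = 1 := by
  rw [GroupAlgebra.counit, MonoidAlgebra.lift_of]
  rfl

local notation "J" => ∑ g : G, ∑ h : G,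
  a g h • (MonoidAlgebra.of ℂ G g ⊗ₜ[ℂ] MonoidAlgebra.of ℂ G h)

lemma phi2_J : phi2 G J = fun p : (G →* ℂˣ) × (G →* ℂˣ) =>
    ∑ g : G, ∑ h : G, a g h * ((p.1 g : ℂˣ) : ℂ) * ((p.2 h : ℂˣ) : ℂ) := by
  funext p
  simp only [map_sum, map_smul, phi2_tmul, fourier_of, Finset.sum_apply, Pi.smul_apply,
    smul_eq_mul]
  all_goals exact Finset.sum_congr rfl fun g _ => Finset.sum_congr rfl fun h _ => by ring

lemma phi3_T1 : phi3 G ((Algebra.TensorProduct.assoc ℂ ℂ ℂ (MonoidAlgebra ℂ G) (MonoidAlgebra ℂ G)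
      (MonoidAlgebra ℂ G))
      ((Algebra.TensorProduct.map (GroupAlgebra.comul G) (AlgHom.id ℂ (MonoidAlgebra ℂ G))) J)) =
    fun p : (G →* ℂˣ) × (G →* ℂˣ) × (G →* ℂˣ) =>
      ∑ g : G, ∑ h : G, a g h * (((p.1 * p.2.1) g : ℂˣ) : ℂ) * ((p.2.2 h : ℂˣ) : ℂ) := by
  funext p
  simp only [map_sum, map_smul, Algebra.TensorProduct.map_tmul, comul_of, AlgHom.coe_id,
    id_eq, Algebra.TensorProduct.assoc_tmul, phi3_tmul, fourier_of, Finset.sum_apply,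
    Pi.smul_apply, smul_eq_mul, MonoidHom.mul_apply, Units.val_mul]
  all_goals exact Finset.sum_congr rfl fun g _ => Finset.sum_congr rfl fun h _ => by ring

lemma phi3_T2 : phi3 G ((Algebra.TensorProduct.assoc ℂ ℂ ℂ (MonoidAlgebra ℂ G) (MonoidAlgebra ℂ G)
      (MonoidAlgebra ℂ G)) (J ⊗ₜ[ℂ] (1 : MonoidAlgebra ℂ G))) =
    fun p : (G →* ℂˣ) × (G →* ℂˣ) × (G →* ℂˣ) =>
      ∑ g : G, ∑ h : G, a g h * ((p.1 g : ℂˣ) : ℂ) * ((p.2.1 h : ℂˣ) : ℂ) := by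
  funext p
  rw [show (1 : MonoidAlgebra ℂ G) = MonoidAlgebra.of ℂ G 1 from (map_one _).symm]
  simp only [TensorProduct.sum_tmul, TensorProduct.smul_tmul', map_sum, map_smul,
    Algebra.TensorProduct.assoc_tmul, phi3_tmul, fourier_of, Finset.sum_apply, Pi.smul_apply,
    smul_eq_mul, map_one, Units.val_one, mul_one, Pi.one_apply]
  all_goals exact Finset.sum_congr rfl fun g _ => Finset.sum_congr rfl fun h _ => by ring

lemma phi3_T3 : phi3 G ((Algebra.TensorProduct.map (AlgHom.id ℂ (MonoidAlgebra ℂ G))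
      (GroupAlgebra.comul G)) J) =
    fun p : (G →* ℂˣ) × (G →* ℂˣ) × (G →* ℂˣ) =>
      ∑ g : G, ∑ h : G, a g h * ((p.1 g : ℂˣ) : ℂ) * (((p.2.1 * p.2.2) h : ℂˣ) : ℂ) := by
  funext p
  simp only [map_sum, map_smul, Algebra.TensorProduct.map_tmul, comul_of, AlgHom.coe_id,
    id_eq, phi3_tmul, fourier_of, Finset.sum_apply, Pi.smul_apply, smul_eq_mul,
    MonoidHom.mul_apply, Units.val_mul]
  all_goals exact Finset.sum_congr rfl fun g _ => Finset.sum_congr rfl fun h _ => by ring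

lemma phi3_T4 : phi3 G ((1 : MonoidAlgebra ℂ G) ⊗ₜ[ℂ] J) =
    fun p : (G →* ℂˣ) × (G →* ℂˣ) × (G →* ℂˣ) =>
      ∑ g : G, ∑ h : G, a g h * ((p.2.1 g : ℂˣ) : ℂ) * ((p.2.2 h : ℂˣ) : ℂ) := by
  funext p
  rw [show (1 : MonoidAlgebra ℂ G) = MonoidAlgebra.of ℂ G 1 from (map_one _).symm]
  simp only [TensorProduct.tmul_sum, TensorProduct.tmul_smul, map_sum, map_smul, phi3_tmul,
    fourier_of, Finset.sum_apply, Pi.smul_apply, smul_eq_mul, map_one, Units.val_one, one_mul, Pi.one_apply]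
  all_goals exact Finset.sum_congr rfl fun g _ => Finset.sum_congr rfl fun h _ => by ring

lemma fourier_E1 : fourier G ((Algebra.TensorProduct.lid ℂ (MonoidAlgebra ℂ G))
      ((Algebra.TensorProduct.map (GroupAlgebra.counit G) (AlgHom.id ℂ (MonoidAlgebra ℂ G))) J)) =
    fun ψ : G →* ℂˣ =>
      ∑ g : G, ∑ h : G, a g h * (((1 : G →* ℂˣ) g : ℂˣ) : ℂ) * ((ψ h : ℂˣ) : ℂ) := by
  funext ψ
  simp only [map_sum, map_smul, Algebra.TensorProduct.map_tmul, counit_of, AlgHom.coe_id,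
    id_eq, Algebra.TensorProduct.lid_tmul, one_smul, fourier_of, Finset.sum_apply,
    Pi.smul_apply, smul_eq_mul, MonoidHom.one_apply, Units.val_one]
  all_goals exact Finset.sum_congr rfl fun g _ => Finset.sum_congr rfl fun h _ => by ring

lemma fourier_E2 : fourier G ((Algebra.TensorProduct.rid ℂ ℂ (MonoidAlgebra ℂ G))
      ((Algebra.TensorProduct.map (AlgHom.id ℂ (MonoidAlgebra ℂ G)) (GroupAlgebra.counit G)) J)) =
    fun χ : G →* ℂˣ =>
      ∑ g : G, ∑ h : G, a g h * ((χ g : ℂˣ) : ℂ) * (((1 : G →* ℂˣ) h : ℂˣ) : ℂ) := by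
  funext χ
  simp only [map_sum, map_smul, Algebra.TensorProduct.map_tmul, counit_of, AlgHom.coe_id,
    id_eq, Algebra.TensorProduct.rid_tmul, one_smul, fourier_of, Finset.sum_apply,
    Pi.smul_apply, smul_eq_mul, MonoidHom.one_apply, Units.val_one]
  all_goals exact Finset.sum_congr rfl fun g _ => Finset.sum_congr rfl fun h _ => by ring

end TwistAux
end

/-- **Twists for abelian groups are 2-cocycles of the dual group.** Let `G` be a finite abelian
group with character group `Ĝ = Hom(G, ℂˣ)`, let `J = Σ_{g,h} a_{gh} g ⊗ h ∈ ℂ[G] ⊗ ℂ[G]`,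
and define `c(χ, ψ) = Σ_{g,h} a_{gh} χ(g) ψ(h)`.  Then `J` is a twist for `ℂ[G]` if and only if
`c` is a normalized 2-cocycle of `Ĝ` with values in `ℂˣ`: `c` is nowhere zero, `c(1, ψ) = 1 =
c(χ, 1)`, and `c(χψ, φ)·c(χ, ψ) = c(χ, ψφ)·c(ψ, φ)`. -/
theorem twist_iff_two_cocycle
    (G : Type*) [CommGroup G] [Fintype G] (a : G → G → ℂ) :
    GroupAlgebra.IsTwist G
        (∑ g : G, ∑ h : G,
          a g h • (MonoidAlgebra.of ℂ G g ⊗ₜ[ℂ] MonoidAlgebra.of ℂ G h))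
      ↔ ((∀ χ ψ : G →* ℂˣ, (∑ g : G, ∑ h : G, a g h * ((χ g : ℂˣ) : ℂ) * ((ψ h : ℂˣ) : ℂ)) ≠ 0) ∧
        (∀ ψ : G →* ℂˣ,
          (∑ g : G, ∑ h : G, a g h * (((1 : G →* ℂˣ) g : ℂˣ) : ℂ) * ((ψ h : ℂˣ) : ℂ)) = 1) ∧
        (∀ χ : G →* ℂˣ,
          (∑ g : G, ∑ h : G, a g h * ((χ g : ℂˣ) : ℂ) * (((1 : G →* ℂˣ) h : ℂˣ) : ℂ)) = 1) ∧
        (∀ χ ψ φ : G →* ℂˣ,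
          (∑ g : G, ∑ h : G, a g h * (((χ * ψ) g : ℂˣ) : ℂ) * ((φ h : ℂˣ) : ℂ)) *
              (∑ g : G, ∑ h : G, a g h * ((χ g : ℂˣ) : ℂ) * ((ψ h : ℂˣ) : ℂ))
            = (∑ g : G, ∑ h : G, a g h * ((χ g : ℂˣ) : ℂ) * (((ψ * φ) h : ℂˣ) : ℂ)) *
              (∑ g : G, ∑ h : G, a g h * ((ψ g : ℂˣ) : ℂ) * ((φ h : ℂˣ) : ℂ)))) := by
  classical
  constructor
  · rintro ⟨hu, ht, hc1, hc2⟩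
    refine ⟨?_, ?_, ?_, ?_⟩
    · intro χ ψ
      have h1 := (hu.map (TwistAux.phi2 G)).map (Pi.evalAlgHom ℂ (fun _ => ℂ) (χ, ψ))
      have h2 := congrFun (TwistAux.phi2_J a) (χ, ψ)
      simp only [Pi.evalAlgHom_apply] at h1
      rw [h2] at h1
      exact isUnit_iff_ne_zero.mp h1
    · intro ψ
      have := congrArg (TwistAux.fourier G) hc1
      rw [TwistAux.fourier_E1 a, map_one] at this
      simpa using congrFun this ψ
    · intro χ
      have := congrArg (TwistAux.fourier G) hc2
      rw [TwistAux.fourier_E2 a, map_one] at this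
      simpa using congrFun this χ
    · intro χ ψ φ
      have := congrArg (TwistAux.phi3 G) ht
      rw [map_mul, map_mul, TwistAux.phi3_T1 a, TwistAux.phi3_T2 a, TwistAux.phi3_T3 a,
        TwistAux.phi3_T4 a] at this
      simpa using congrFun this (χ, ψ, φ)
  · rintro ⟨hne, h1, h2, h4⟩
    refine ⟨?_, ?_, ?_, ?_⟩
    · -- invertibility
      set Jinv : MonoidAlgebra ℂ G ⊗[ℂ] MonoidAlgebra ℂ G :=
        ∑ p : (G →* ℂˣ) × (G →* ℂˣ),
          (∑ g : G, ∑ h : G, a g h * ((p.1 g : ℂˣ) : ℂ) * ((p.2 h : ℂˣ) : ℂ))⁻¹ •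
            (TwistAux.deltaElt G p.1 ⊗ₜ[ℂ] TwistAux.deltaElt G p.2) with hJinv
      have hinv : TwistAux.phi2 G Jinv = fun p : (G →* ℂˣ) × (G →* ℂˣ) =>
          (∑ g : G, ∑ h : G, a g h * ((p.1 g : ℂˣ) : ℂ) * ((p.2 h : ℂˣ) : ℂ))⁻¹ := by
        funext q
        simp only [hJinv, map_sum, map_smul, TwistAux.phi2_tmul, TwistAux.fourier_deltaElt,
          Finset.sum_apply, Pi.smul_apply, smul_eq_mul]
        rw [Finset.sum_eq_single q]
        · simp
        · intro p _ hpq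
          have : ¬(p.1 = q.1 ∧ p.2 = q.2) := by
            intro hc
            exact hpq (Prod.ext hc.1 hc.2)
          by_cases hp1 : p.1 = q.1
          · have hp2 : p.2 ≠ q.2 := fun hc => this ⟨hp1, hc⟩
            simp [hp1, hp2]
          · simp [hp1]
        · intro hq
          exact absurd (Finset.mem_univ q) hq
      have hmul : (∑ g : G, ∑ h : G,
          a g h • (MonoidAlgebra.of ℂ G g ⊗ₜ[ℂ] MonoidAlgebra.of ℂ G h)) * Jinv = 1 := by
        apply TwistAux.phi2_injective G
        rw [map_mul, map_one, TwistAux.phi2_J a, hinv]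
        funext q
        rw [Pi.mul_apply, Pi.one_apply]
        exact mul_inv_cancel₀ (hne q.1 q.2)
      exact IsUnit.of_mul_eq_one _ hmul
    · -- twist equation
      apply TwistAux.phi3_injective G
      rw [map_mul, map_mul, TwistAux.phi3_T1 a, TwistAux.phi3_T2 a, TwistAux.phi3_T3 a,
        TwistAux.phi3_T4 a]
      funext p
      simpa using h4 p.1 p.2.1 p.2.2
    · apply TwistAux.fourier_injective G
      rw [TwistAux.fourier_E1 a, map_one]
      funext ψ
      simpa using h1 ψ
    · apply TwistAux.fourier_injective G
      rw [TwistAux.fourier_E2 a, map_one]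
      funext χ
      simpa using h2 χ
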